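/- Let κ ∈ (0,1/2) and δ > 0. The map y ↦ y + log[(1 + δe^{−2κ y}·(1+2κ)/(1−2κ))/(1 + δe^{−2κ y}·(1−2κ)/(1+2κ))] is a strictly increasing bijection from ℝ to ℝ. -/
import Mathlib


/-- Auxiliary: strict monotonicity and bijectivity for the normalized form. -/
theorem soliton_aux (κ δ a b : ℝ)
    (hκ₀ : 0 < κ) (hκ₁ : κ < 1/2) (hδ : 0 < δ)
    (ha_def : a = δ*(1+2*κ)/(1-2*κ)) (hb_def : b = δ*(1-2*κ)/(1+2*κ)) :
    StrictMono (fun y : ℝ => y + (Real.log (1 + a * Real.exp (-2*κ*y))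
        - Real.log (1 + b * Real.exp (-2*κ*y)))) ∧
    Function.Bijective (fun y : ℝ => y + (Real.log (1 + a * Real.exp (-2*κ*y))
        - Real.log (1 + b * Real.exp (-2*κ*y)))) := by
  have hm : (0:ℝ) < 1 - 2*κ := by linarith
  have hp : (0:ℝ) < 1 + 2*κ := by linarith
  have ha : 0 < a := by rw [ha_def]; positivity
  have hb : 0 < b := by rw [hb_def]; positivity
  have hab : b ≤ a := by
    rw [ha_def, hb_def, div_le_div_iff₀ hp hm]
    nlinarith [sq_nonneg κ, hκ₀.le]
  set f : ℝ → ℝ := fun y : ℝ => y + (Real.log (1 + a * Real.exp (-2*κ*y))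
        - Real.log (1 + b * Real.exp (-2*κ*y))) with hf_def
  have key : ∀ y : ℝ, HasDerivAt f
      ((1 + δ * Real.exp (-2*κ*y))^2 /
        ((1 + a * Real.exp (-2*κ*y)) * (1 + b * Real.exp (-2*κ*y)))) y := by
    intro y
    set E := Real.exp (-2*κ*y) with hE
    have hEpos : 0 < E := Real.exp_pos _
    have hNpos : 0 < 1 + a * E := by positivity
    have hDpos : 0 < 1 + b * E := by positivity
    have hu : HasDerivAt (fun y : ℝ => -2*κ*y) (-2*κ) y := by
      simpa using (hasDerivAt_id y).const_mul (-2*κ)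
    have he : HasDerivAt (fun y : ℝ => Real.exp (-2*κ*y)) (E * (-2*κ)) y := hu.exp
    have hN : HasDerivAt (fun y : ℝ => 1 + a * Real.exp (-2*κ*y)) (a * (E * (-2*κ))) y :=
      (he.const_mul a).const_add 1
    have hD : HasDerivAt (fun y : ℝ => 1 + b * Real.exp (-2*κ*y)) (b * (E * (-2*κ))) y :=
      (he.const_mul b).const_add 1
    have hlogN := hN.log hNpos.ne'
    have hlogD := hD.log hDpos.ne'
    have hsum := (hasDerivAt_id y).add (hlogN.sub hlogD)
    have halg : 1 + (a * (E * (-2*κ)) / (1 + a*E) - b * (E * (-2*κ)) / (1 + b*E))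
        = (1 + δ * E)^2 / ((1 + a*E) * (1 + b*E)) := by
      rw [ha_def, hb_def]
      field_simp
      ring
    rw [← halg]
    exact hsum
  have hcont : Continuous f := by
    rw [continuous_iff_continuousAt]
    exact fun y => (key y).continuousAt
  have hmono : StrictMono f := by
    apply strictMono_of_deriv_pos
    intro y
    rw [(key y).deriv]
    have hEpos : 0 < Real.exp (-2*κ*y) := Real.exp_pos _
    positivity
  refine ⟨hmono, hmono.injective, ?_⟩
  -- bounds
  have hlow : ∀ y : ℝ, y ≤ f y := by
    intro y
    have hEpos : 0 < Real.exp (-2*κ*y) := Real.exp_pos _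
    have : Real.log (1 + b * Real.exp (-2*κ*y)) ≤ Real.log (1 + a * Real.exp (-2*κ*y)) :=
      Real.log_le_log (by positivity) (by nlinarith)
    simp only [hf_def]
    linarith
  have hC : 0 ≤ Real.log (a / b) := Real.log_nonneg ((one_le_div hb).mpr hab)
  have hhigh : ∀ y : ℝ, f y ≤ y + Real.log (a / b) := by
    intro y
    have hEpos : 0 < Real.exp (-2*κ*y) := Real.exp_pos _
    have hNpos : 0 < 1 + a * Real.exp (-2*κ*y) := by positivity
    have hDpos : 0 < 1 + b * Real.exp (-2*κ*y) := by positivity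
    have h1 : Real.log (1 + a * Real.exp (-2*κ*y)) - Real.log (1 + b * Real.exp (-2*κ*y))
        = Real.log ((1 + a * Real.exp (-2*κ*y)) / (1 + b * Real.exp (-2*κ*y))) :=
      (Real.log_div hNpos.ne' hDpos.ne').symm
    have h2 : (1 + a * Real.exp (-2*κ*y)) / (1 + b * Real.exp (-2*κ*y)) ≤ a / b := by
      rw [div_le_div_iff₀ hDpos hb]
      nlinarith
    have h3 : Real.log ((1 + a * Real.exp (-2*κ*y)) / (1 + b * Real.exp (-2*κ*y)))
        ≤ Real.log (a / b) := Real.log_le_log (by positivity) h2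
    simp only [hf_def]
    linarith
  intro t
  set C := Real.log (a / b) with hCdef
  have h1 : f (t - C) ≤ t := by have := hhigh (t - C); linarith
  have h2 : t ≤ f t := hlow t
  have hle : t - C ≤ t := by linarith
  obtain ⟨y, _, hy⟩ := intermediate_value_Icc hle hcont.continuousOn ⟨h1, h2⟩
  exact ⟨y, hy⟩

theorem soliton_change_of_variables (κ δ : ℝ)
    (hκ₀ : 0 < κ) (hκ₁ : κ < 1/2) (hδ : 0 < δ) :
    StrictMono (fun y : ℝ => y + Real.log
      ((1 + δ * Real.exp (-2*κ*y) * (1 + 2*κ)/(1 - 2*κ)) /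
       (1 + δ * Real.exp (-2*κ*y) * (1 - 2*κ)/(1 + 2*κ)))) ∧
    Function.Bijective (fun y : ℝ => y + Real.log
      ((1 + δ * Real.exp (-2*κ*y) * (1 + 2*κ)/(1 - 2*κ)) /
       (1 + δ * Real.exp (-2*κ*y) * (1 - 2*κ)/(1 + 2*κ)))) := by
  have hm : (0:ℝ) < 1 - 2*κ := by linarith
  have hp : (0:ℝ) < 1 + 2*κ := by linarith
  set a : ℝ := δ*(1+2*κ)/(1-2*κ) with ha_def
  set b : ℝ := δ*(1-2*κ)/(1+2*κ) with hb_def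
  have ha : 0 < a := by rw [ha_def]; positivity
  have hb : 0 < b := by rw [hb_def]; positivity
  have hrw : ∀ y : ℝ, (1 + δ * Real.exp (-2*κ*y) * (1 + 2*κ)/(1 - 2*κ)) /
       (1 + δ * Real.exp (-2*κ*y) * (1 - 2*κ)/(1 + 2*κ))
       = (1 + a * Real.exp (-2*κ*y)) / (1 + b * Real.exp (-2*κ*y)) := by
    intro y
    rw [ha_def, hb_def]
    ring
  have hlog : ∀ y : ℝ, Real.log ((1 + δ * Real.exp (-2*κ*y) * (1 + 2*κ)/(1 - 2*κ)) /
       (1 + δ * Real.exp (-2*κ*y) * (1 - 2*κ)/(1 + 2*κ)))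
       = Real.log (1 + a * Real.exp (-2*κ*y)) - Real.log (1 + b * Real.exp (-2*κ*y)) := by
    intro y
    have hEpos : 0 < Real.exp (-2*κ*y) := Real.exp_pos _
    have hNpos : 0 < 1 + a * Real.exp (-2*κ*y) := by positivity
    have hDpos : 0 < 1 + b * Real.exp (-2*κ*y) := by positivity
    rw [hrw y, Real.log_div hNpos.ne' hDpos.ne']
  simp only [hlog]
  exact soliton_aux κ δ a b hκ₀ hκ₁ hδ ha_def hb_def
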